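/- arXiv:1705.02764 — 4 statements merged into one kernel-verified Lean document; each statement's English description precedes it below -/
import Mathlib

section
/- There exists a universal constant c > 0 such that for every open set D ⊆ ℝ² of finite Lebesgue measure μ(D) and every continuously differentiable function u : ℝ² → ℝ whose support is compact and contained in D, one has ∫_{ℝ²} u(x)² dx ≤ c · μ(D) · ∫_{ℝ²} ‖∇u(x)‖² dx. (Uniform Poincaré inequality with constant depending only on the area of the design region; Lemma 3 of the paper, stated for smooth compactly supported functions.) -/
open MeasureTheory ENNReal NNReal

lemma integral_sq_eq {F : Type*} [NormedAddCommGroup F] {α : Type*} [MeasurableSpace α]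
    (μ : Measure α) (f : α → F) (hf : AEStronglyMeasurable f μ) :
    ∫ x, ‖f x‖ ^ 2 ∂μ = (∫⁻ x, (‖f x‖₊ : ℝ≥0∞) ^ 2 ∂μ).toReal := by
  rw [integral_eq_lintegral_of_nonneg_ae (Filter.Eventually.of_forall fun x => by positivity)
    ((hf.norm.aemeasurable.pow_const 2).aestronglyMeasurable)]
  congr 1
  refine lintegral_congr fun x => ?_
  rw [ENNReal.ofReal_pow (norm_nonneg _), ofReal_norm]
  rfl

lemma eLpNorm_two_sq {F : Type*} [NormedAddCommGroup F] {α : Type*} [MeasurableSpace α]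
    (μ : Measure α) (f : α → F) :
    (eLpNorm f 2 μ) ^ 2 = ∫⁻ x, (‖f x‖₊ : ℝ≥0∞) ^ 2 ∂μ := by
  rw [eLpNorm_eq_lintegral_rpow_enorm_toReal (by norm_num) (by norm_num),
    ← ENNReal.rpow_natCast _ 2, ← ENNReal.rpow_mul]
  norm_num
  rfl

/-- Uniform Poincaré inequality on open subsets of ℝ², with constant depending only
on the area of the domain, stated for C¹ compactly supported functions. -/
theorem uniform_poincare_inequality :
    ∃ c : ℝ, 0 < c ∧
      ∀ (D : Set (EuclideanSpace ℝ (Fin 2))), IsOpen D → volume D < ⊤ →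
        ∀ (u : EuclideanSpace ℝ (Fin 2) → ℝ), ContDiff ℝ 1 u → HasCompactSupport u →
          tsupport u ⊆ D →
          ∫ x, (u x) ^ 2 ≤ c * (volume D).toReal * ∫ x, ‖fderiv ℝ u x‖ ^ 2 := by
  set μ := (volume : Measure (EuclideanSpace ℝ (Fin 2))) with hμ
  set C : ℝ≥0 := SNormLESNormFDerivOfEqConst ℝ μ (4/3) with hC
  refine ⟨(C : ℝ) ^ 2 + 1, by positivity, fun D _hD hDfin u hu h2u hsupp => ?_⟩
  have hM : volume D ≠ ⊤ := hDfin.ne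
  have husupp : Function.support u ⊆ D := subset_closure.trans hsupp
  have hdsupp : Function.support (fderiv ℝ u) ⊆ D :=
    (support_fderiv_subset ℝ).trans hsupp
  have hucont : Continuous u := hu.continuous
  have hdcont : Continuous (fderiv ℝ u) := (hu.fderiv_right (m := 0) le_rfl).continuous
  -- GNS inequality
  have hGNS : eLpNorm u 4 μ ≤ C * eLpNorm (fderiv ℝ u) ((4/3 : ℝ≥0) : ℝ≥0∞) μ :=
    eLpNorm_le_eLpNorm_fderiv_of_eq (μ := μ) (p := 4/3) (p' := 4) hu h2u
      (by rw [← NNReal.coe_le_coe]; push_cast; norm_num) (by simp)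
      (by push_cast; simp; norm_num)
  -- Hölder step 1
  have h1 : eLpNorm u 2 μ ≤ eLpNorm u 4 μ * (volume D) ^ ((1:ℝ)/4) := by
    calc eLpNorm u 2 μ = eLpNorm u 2 (μ.restrict D) :=
          (eLpNorm_restrict_eq_of_support_subset husupp).symm
      _ ≤ eLpNorm u 4 (μ.restrict D) * (μ.restrict D) Set.univ ^ ((1:ℝ)/(2:ℝ≥0∞).toReal - 1/(4:ℝ≥0∞).toReal) :=
          eLpNorm_le_eLpNorm_mul_rpow_measure_univ (by norm_num)
            hucont.aestronglyMeasurable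
      _ = eLpNorm u 4 μ * (volume D) ^ ((1:ℝ)/4) := by
          rw [eLpNorm_restrict_eq_of_support_subset husupp, Measure.restrict_apply_univ]
          norm_num
          rfl
  -- Hölder step 2
  have h2 : eLpNorm (fderiv ℝ u) ((4/3 : ℝ≥0) : ℝ≥0∞) μ
      ≤ eLpNorm (fderiv ℝ u) 2 μ * (volume D) ^ ((1:ℝ)/4) := by
    calc eLpNorm (fderiv ℝ u) ((4/3 : ℝ≥0) : ℝ≥0∞) μ
        = eLpNorm (fderiv ℝ u) ((4/3 : ℝ≥0) : ℝ≥0∞) (μ.restrict D) :=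
          (eLpNorm_restrict_eq_of_support_subset (ε := EuclideanSpace ℝ (Fin 2) →L[ℝ] ℝ) hdsupp).symm
      _ ≤ eLpNorm (fderiv ℝ u) 2 (μ.restrict D) *
            (μ.restrict D) Set.univ ^ ((1:ℝ)/(((4/3 : ℝ≥0)):ℝ≥0∞).toReal - 1/(2:ℝ≥0∞).toReal) := by
          refine eLpNorm_le_eLpNorm_mul_rpow_measure_univ ?_ hdcont.aestronglyMeasurable
          · rw [← ENNReal.coe_ofNat, ENNReal.coe_le_coe, ← NNReal.coe_le_coe]
            push_cast; norm_num
      _ = eLpNorm (fderiv ℝ u) 2 μ * (volume D) ^ ((1:ℝ)/4) := by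
          rw [eLpNorm_restrict_eq_of_support_subset (ε := EuclideanSpace ℝ (Fin 2) →L[ℝ] ℝ) hdsupp, Measure.restrict_apply_univ]
          congr 1
          rw [ENNReal.coe_toReal]
          push_cast; norm_num
          rfl
  -- combine
  have hmain : eLpNorm u 2 μ ≤ C * (volume D) ^ ((1:ℝ)/2) * eLpNorm (fderiv ℝ u) 2 μ := by
    calc eLpNorm u 2 μ ≤ eLpNorm u 4 μ * (volume D) ^ ((1:ℝ)/4) := h1
      _ ≤ (C * eLpNorm (fderiv ℝ u) ((4/3 : ℝ≥0) : ℝ≥0∞) μ) * (volume D) ^ ((1:ℝ)/4) := by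
          gcongr
      _ ≤ (C * (eLpNorm (fderiv ℝ u) 2 μ * (volume D) ^ ((1:ℝ)/4))) * (volume D) ^ ((1:ℝ)/4) := by
          gcongr
      _ = C * (volume D) ^ ((1:ℝ)/2) * eLpNorm (fderiv ℝ u) 2 μ := by
          rw [show (1:ℝ)/2 = 1/4 + 1/4 by norm_num,
            ENNReal.rpow_add_of_nonneg _ _ (by norm_num) (by norm_num)]
          ring
  -- square it
  have hsq : (eLpNorm u 2 μ) ^ 2 ≤ (C : ℝ≥0∞) ^ 2 * volume D * (eLpNorm (fderiv ℝ u) 2 μ) ^ 2 := by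
    calc (eLpNorm u 2 μ) ^ 2 ≤ (C * (volume D) ^ ((1:ℝ)/2) * eLpNorm (fderiv ℝ u) 2 μ) ^ 2 := by
          gcongr
      _ = (C : ℝ≥0∞) ^ 2 * ((volume D) ^ ((1:ℝ)/2)) ^ 2 * (eLpNorm (fderiv ℝ u) 2 μ) ^ 2 := by ring
      _ = (C : ℝ≥0∞) ^ 2 * volume D * (eLpNorm (fderiv ℝ u) 2 μ) ^ 2 := by
          rw [← ENNReal.rpow_natCast ((volume D) ^ ((1:ℝ)/2)) 2, ← ENNReal.rpow_mul]
          norm_num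
  -- finiteness of RHS
  have hd2 : eLpNorm (fderiv ℝ u) 2 μ ≠ ⊤ :=
    (hdcont.memLp_of_hasCompactSupport (μ := μ) (h2u.fderiv ℝ)).eLpNorm_lt_top.ne
  have hRHSfin : (C : ℝ≥0∞) ^ 2 * volume D * (eLpNorm (fderiv ℝ u) 2 μ) ^ 2 ≠ ⊤ := by
    apply ENNReal.mul_ne_top (ENNReal.mul_ne_top (by simp) hM) (by simp [pow_eq_top_iff, hd2])
  -- convert to real integrals
  have hu2 : ∫ x, (u x) ^ 2 ∂μ = ((eLpNorm u 2 μ) ^ 2).toReal := by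
    rw [eLpNorm_two_sq, ← integral_sq_eq μ u hucont.aestronglyMeasurable]
    simp [Real.norm_eq_abs, sq_abs]
  have hd2' : ∫ x, ‖fderiv ℝ u x‖ ^ 2 ∂μ = ((eLpNorm (fderiv ℝ u) 2 μ) ^ 2).toReal := by
    rw [eLpNorm_two_sq, ← integral_sq_eq μ _ hdcont.aestronglyMeasurable]
  rw [hu2, hd2']
  calc ((eLpNorm u 2 μ) ^ 2).toReal
      ≤ ((C : ℝ≥0∞) ^ 2 * volume D * (eLpNorm (fderiv ℝ u) 2 μ) ^ 2).toReal :=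
        ENNReal.toReal_mono hRHSfin hsq
    _ = (C : ℝ) ^ 2 * (volume D).toReal * ((eLpNorm (fderiv ℝ u) 2 μ) ^ 2).toReal := by
        rw [ENNReal.toReal_mul, ENNReal.toReal_mul]
        simp
    _ ≤ ((C : ℝ) ^ 2 + 1) * (volume D).toReal * ((eLpNorm (fderiv ℝ u) 2 μ) ^ 2).toReal := by
        gcongr
        linarith
end

section
/- Let N ∈ ℕ, let (K_n) be a sequence of nonempty compact subsets of ℝ², each having at most N connected components, and let K be a nonempty compact subset of ℝ² such that the Hausdorff distance d_H(K_n, K) tends to 0 as n → ∞. Then K has at most N connected components. (This is the key stability property of the constraint ♯Ω^c ≤ N defining Šverák's admissible class, under complementary Hausdorff convergence.) -/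
open Set Metric

/-- In a compact Hausdorff space, finitely many points in pairwise distinct connected
components can be separated by a clopen partition of the whole space. -/
lemma aux_clopen_partition {X : Type*} [TopologicalSpace X] [T2Space X] [CompactSpace X]
    {n : ℕ} (x : Fin (n+1) → X)
    (hx : ∀ i j : Fin (n+1), i ≠ j → connectedComponent (x i) ≠ connectedComponent (x j)) :
    ∃ U : Fin (n+1) → Set X, (∀ i, IsClopen (U i)) ∧ (∀ i, x i ∈ U i) ∧
      (∀ i j, i ≠ j → Disjoint (U i) (U j)) ∧ (⋃ i, U i) = Set.univ := by
  have key : ∀ i j : Fin (n+1), ∃ Z : Set X, IsClopen Z ∧ x i ∈ Z ∧ (i ≠ j → x j ∉ Z) := by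
    intro i j
    by_cases hij : i = j
    · exact ⟨Set.univ, isClopen_univ, Set.mem_univ _, fun h => absurd hij h⟩
    · have hj : x j ∉ connectedComponent (x i) := by
        intro hm
        exact hx i j hij (connectedComponent_eq hm)
      rw [connectedComponent_eq_iInter_isClopen] at hj
      simp only [Set.mem_iInter, not_forall] at hj
      obtain ⟨⟨Z, hZ, hxi⟩, hxj⟩ := hj
      exact ⟨Z, hZ, hxi, fun _ => hxj⟩
  choose A hA1 hA2 hA3 using key
  set B : Fin (n+1) → Set X := fun i => ⋂ j, A i j with hB
  have hBclopen : ∀ i, IsClopen (B i) := fun i => isClopen_iInter_of_finite (hA1 i)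
  have hBmem : ∀ i, x i ∈ B i := fun i => Set.mem_iInter.2 fun j => hA2 i j
  have hBnot : ∀ i j, i ≠ j → x j ∉ B i := fun i j hij hm =>
    hA3 i j hij (Set.mem_iInter.1 hm j)
  set C : Fin (n+1) → Set X := fun i =>
    B i \ ⋃ j : {j : Fin (n+1) // j < i}, B j with hC
  have hCclopen : ∀ i, IsClopen (C i) := by
    intro i
    exact (hBclopen i).diff (isClopen_iUnion_of_finite fun j : {j : Fin (n+1) // j < i} => hBclopen j.1)
  have hCmem : ∀ i, x i ∈ C i := by
    intro i
    refine ⟨hBmem i, fun h => ?_⟩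
    obtain ⟨⟨j, hj⟩, hmem⟩ := Set.mem_iUnion.1 h
    exact hBnot j i (ne_of_lt hj) hmem
  have hCdisj : ∀ i j : Fin (n+1), i ≠ j → Disjoint (C i) (C j) := by
    have h' : ∀ i j : Fin (n+1), i < j → Disjoint (C i) (C j) := by
      intro i j hij
      rw [Set.disjoint_left]
      rintro z ⟨hzB, -⟩ ⟨-, hzN⟩
      exact hzN (Set.mem_iUnion.2 ⟨⟨i, hij⟩, hzB⟩)
    intro i j hij
    rcases lt_or_gt_of_ne hij with h | h
    · exact h' i j h
    · exact (h' j i h).symm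
  set R : Set X := (⋃ i, C i)ᶜ with hR
  have hRclopen : IsClopen R := (isClopen_iUnion_of_finite hCclopen).compl
  have hRdisj : ∀ j, Disjoint R (C j) := by
    intro j
    rw [Set.disjoint_left]
    intro z hz hz'
    exact hz (Set.mem_iUnion.2 ⟨j, hz'⟩)
  set U : Fin (n+1) → Set X := fun i => if i = 0 then C 0 ∪ R else C i with hU
  refine ⟨U, ?_, ?_, ?_, ?_⟩
  · intro i
    rw [hU]
    by_cases h : i = 0
    · simp only [h, if_pos]
      exact (hCclopen 0).union hRclopen
    · simp only [if_neg h]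
      exact hCclopen i
  · intro i
    rw [hU]
    by_cases h : i = 0
    · subst h; simp only [if_pos]
      exact Or.inl (hCmem 0)
    · simp only [if_neg h]
      exact hCmem i
  · intro i j hij
    rw [hU]
    by_cases hi : i = 0
    · subst hi
      simp only [if_pos, if_neg hij.symm]
      exact Disjoint.union_left (hCdisj 0 j hij) (hRdisj j)
    · by_cases hj : j = 0
      · subst hj
        simp only [if_neg hi, if_pos]
        exact (Disjoint.union_left (hCdisj 0 i (Ne.symm hi)) (hRdisj i)).symm
      · simp only [if_neg hi, if_neg hj]
        exact hCdisj i j hij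
  · ext z
    simp only [Set.mem_univ, iff_true, Set.mem_iUnion]
    by_cases h : z ∈ ⋃ i, C i
    · obtain ⟨i, hi⟩ := Set.mem_iUnion.1 h
      by_cases h0 : i = 0
      · subst h0
        exact ⟨0, by rw [hU]; simp only [if_pos]; exact Or.inl hi⟩
      · exact ⟨i, by rw [hU]; simp only [if_neg h0]; exact hi⟩
    · exact ⟨0, by rw [hU]; simp only [if_pos]; exact Or.inr h⟩

/-- Finitely many pairwise disjoint nonempty compact sets admit pairwise disjoint
thickenings of a common positive radius. -/
lemma aux_thickenings {X : Type*} [MetricSpace X] {n : ℕ} (V : Fin (n+1) → Set X)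
    (hc : ∀ i, IsCompact (V i)) (hd : ∀ i j, i ≠ j → Disjoint (V i) (V j)) :
    ∃ ε : ℝ, 0 < ε ∧ ∀ i j, i ≠ j →
      Disjoint (Metric.thickening ε (V i)) (Metric.thickening ε (V j)) := by
  have key : ∀ p : Fin (n+1) × Fin (n+1), ∃ δ : ℝ, 0 < δ ∧ (p.1 ≠ p.2 →
      Disjoint (Metric.thickening δ (V p.1)) (Metric.thickening δ (V p.2))) := by
    rintro ⟨i, j⟩
    by_cases hij : i = j
    · exact ⟨1, one_pos, fun h => absurd hij h⟩
    · obtain ⟨δ, hδ, hdisj⟩ := (hd i j hij).exists_thickenings (hc i) (hc j).isClosed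
      exact ⟨δ, hδ, fun _ => hdisj⟩
  choose δ hδpos hδ using key
  obtain ⟨ε, hεpos, hεle⟩ : ∃ ε : ℝ, 0 < ε ∧ ∀ p, ε ≤ δ p := by
    refine ⟨Finset.univ.inf' ⟨(0, 0), Finset.mem_univ _⟩ δ, ?_,
      fun p => Finset.inf'_le _ (Finset.mem_univ p)⟩
    refine (Finset.lt_inf'_iff _).2 ?_
    exact fun p _ => hδpos p
  refine ⟨ε, hεpos, fun i j hij => ?_⟩
  exact (hδ (i, j) hij).mono (Metric.thickening_mono (hεle (i, j)) _)
    (Metric.thickening_mono (hεle (i, j)) _)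

/-- A Hausdorff limit of nonempty compact subsets of ℝ², each having at most N
connected components, has at most N connected components. -/
theorem hausdorff_limit_components_le
    (N : ℕ) (K : ℕ → Set (EuclideanSpace ℝ (Fin 2))) (L : Set (EuclideanSpace ℝ (Fin 2)))
    (hKc : ∀ n, IsCompact (K n)) (hKne : ∀ n, (K n).Nonempty)
    (hKcomp : ∀ n, Cardinal.mk (ConnectedComponents (K n)) ≤ N)
    (hLc : IsCompact L) (hLne : L.Nonempty)
    (hconv : Filter.Tendsto (fun n => Metric.hausdorffDist (K n) L) Filter.atTop (nhds 0)) :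
    Cardinal.mk (ConnectedComponents L) ≤ N := by
  by_contra hN
  rw [not_le] at hN
  haveI : CompactSpace ↥L := isCompact_iff_compactSpace.mp hLc
  have hle : Cardinal.mk (Fin (N+1)) ≤ Cardinal.mk (ConnectedComponents ↥L) := by
    rw [Cardinal.mk_fin]
    push_cast
    exact (Cardinal.add_one_le_succ _).trans (Order.succ_le_of_lt hN)
  obtain ⟨f⟩ := Cardinal.le_def _ _ |>.mp hle
  have hrep : ∀ i, ∃ y : ↥L, (ConnectedComponents.mk y) = f i := fun i =>
    ConnectedComponents.surjective_coe (f i)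
  choose x hxrep using hrep
  have hx : ∀ i j, i ≠ j → connectedComponent (x i) ≠ connectedComponent (x j) := by
    intro i j hij hcc
    exact hij (f.injective
      (by rw [← hxrep i, ← hxrep j]; exact ConnectedComponents.coe_eq_coe.2 hcc))
  obtain ⟨U, hUclopen, hUmem, hUdisj, hUcover⟩ := aux_clopen_partition x hx
  set V : Fin (N+1) → Set (EuclideanSpace ℝ (Fin 2)) := fun i => Subtype.val '' U i with hV
  have hVc : ∀ i, IsCompact (V i) := fun i =>
    ((hUclopen i).isClosed.isCompact).image continuous_subtype_val
  have hVd : ∀ i j, i ≠ j → Disjoint (V i) (V j) := fun i j hij =>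
    (Set.disjoint_image_iff Subtype.val_injective).2 (hUdisj i j hij)
  have hVcover : L ⊆ ⋃ i, V i := by
    intro y hy
    have hmem : (⟨y, hy⟩ : ↥L) ∈ ⋃ i, U i := hUcover ▸ Set.mem_univ _
    obtain ⟨i, hi⟩ := Set.mem_iUnion.1 hmem
    exact Set.mem_iUnion.2 ⟨i, ⟨⟨y, hy⟩, hi, rfl⟩⟩
  have hVne : ∀ i, ∃ y, y ∈ V i ∧ y ∈ L := fun i =>
    ⟨(x i : EuclideanSpace ℝ (Fin 2)), ⟨x i, hUmem i, rfl⟩, (x i).2⟩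
  obtain ⟨ε, hε, hWd⟩ := aux_thickenings V hVc hVd
  obtain ⟨n, hn⟩ := (hconv.eventually (gt_mem_nhds hε)).exists
  have hfin : EMetric.hausdorffEdist (K n) L ≠ ⊤ :=
    Metric.hausdorffEdist_ne_top_of_nonempty_of_bounded (hKne n) hLne
      (hKc n).isBounded hLc.isBounded
  set W : Fin (N+1) → Set (EuclideanSpace ℝ (Fin 2)) :=
    fun i => Metric.thickening ε (V i) with hW
  have hWopen : ∀ i, IsOpen (W i) := fun i => Metric.isOpen_thickening
  have hKsub : K n ⊆ ⋃ i, W i := by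
    intro z hz
    obtain ⟨y, hyL, hdzy⟩ := Metric.exists_dist_lt_of_hausdorffDist_lt hz hn hfin
    obtain ⟨i, hi⟩ := Set.mem_iUnion.1 (hVcover hyL)
    exact Set.mem_iUnion.2 ⟨i, Metric.mem_thickening_iff.2 ⟨y, hi, hdzy⟩⟩
  have hKmeet : ∀ i, ∃ z, z ∈ K n ∧ z ∈ W i := by
    intro i
    obtain ⟨y, hyV, hyL⟩ := hVne i
    obtain ⟨z, hzK, hdzy⟩ := Metric.exists_dist_lt_of_hausdorffDist_lt' hyL hn hfin
    exact ⟨z, hzK, Metric.mem_thickening_iff.2 ⟨y, hyV, hdzy⟩⟩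
  choose z hzK hzW using hKmeet
  have hinj : Function.Injective
      (fun i => (ConnectedComponents.mk (⟨z i, hzK i⟩ : ↥(K n)))) := by
    intro i j hij
    by_contra hne
    have hcc : connectedComponent (⟨z i, hzK i⟩ : ↥(K n)) =
        connectedComponent (⟨z j, hzK j⟩ : ↥(K n)) :=
      ConnectedComponents.coe_eq_coe.1 hij
    set S : Set (EuclideanSpace ℝ (Fin 2)) :=
      Subtype.val '' connectedComponent (⟨z i, hzK i⟩ : ↥(K n)) with hS
    have hSconn : IsPreconnected S :=
      isPreconnected_connectedComponent.image _ continuous_subtype_val.continuousOn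
    have hzi : z i ∈ S := ⟨_, mem_connectedComponent, rfl⟩
    have hzj : z j ∈ S := ⟨⟨z j, hzK j⟩, hcc ▸ mem_connectedComponent, rfl⟩
    have hSsub : S ⊆ ⋃ k, W k := by
      rintro a ⟨w, -, rfl⟩
      exact hKsub w.2
    have hmain : S ⊆ W i := by
      refine hSconn.subset_left_of_subset_union (hWopen i)
        (isOpen_iUnion fun k : {k : Fin (N+1) // k ≠ i} => hWopen k.1) ?_ ?_ ⟨z i, hzi, hzW i⟩
      · rw [Set.disjoint_iUnion_right]
        exact fun k => hWd i k.1 (fun h => k.2 h.symm)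
      · intro a ha
        obtain ⟨k, hk⟩ := Set.mem_iUnion.1 (hSsub ha)
        by_cases hki : k = i
        · exact Or.inl (hki ▸ hk)
        · exact Or.inr (Set.mem_iUnion.2 ⟨⟨k, hki⟩, hk⟩)
    exact Set.disjoint_left.1 (hWd i j hne) (hmain hzj) (hzW j)
  have hcard : Cardinal.mk (Fin (N+1)) ≤ Cardinal.mk (ConnectedComponents ↥(K n)) :=
    Cardinal.mk_le_of_injective hinj
  rw [Cardinal.mk_fin] at hcard
  have hfinal := hcard.trans (hKcomp n)
  exact absurd (Nat.cast_le.mp hfinal) (by omega)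
end

section
/- Let D ⊆ ℝ² be a nonempty bounded open set, ω ⊆ D a nonempty open set, and N ∈ ℕ. Let (Ω_n) be a sequence in the admissible class 𝒪_ω^N. Then there exist Ω ∈ 𝒪_ω^N and a subsequence (Ω_{n_k}) such that d_H(Ω_{n_k}^c, Ω^c) → 0 as k → ∞, i.e. Ω_{n_k} converges to Ω in the complementary Hausdorff topology. (Compactness of the class 𝒪_ω^N in the complementary Hausdorff topology.) -/
open Metric EMetric Set Filter

/-- If a compact nonempty set is approximated in Hausdorff distance by compact sets
whose subspaces have at most `N` connected components, then it has at most `N`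
connected components. -/
lemma components_card_le_of_approx {α : Type} [MetricSpace α] {N : ℕ} {A : Set α}
    (hAc : IsCompact A) (hAne : A.Nonempty)
    (happrox : ∀ ε > (0:ℝ), ∃ B : Set α, IsCompact B ∧ B.Nonempty ∧
      EMetric.hausdorffEdist B A ≠ ⊤ ∧ Cardinal.mk (ConnectedComponents ↥B) ≤ N ∧
      Metric.hausdorffDist B A < ε) :
    Cardinal.mk (ConnectedComponents ↥A) ≤ N := by
  classical
  by_contra hlt
  push_neg at hlt
  haveI : CompactSpace ↥A := isCompact_iff_compactSpace.mp hAc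
  have hsucc : ((N+1 : ℕ) : Cardinal) ≤ Cardinal.mk (ConnectedComponents ↥A) := by
    have : ((N+1 : ℕ) : Cardinal) = Order.succ (N : Cardinal) := Cardinal.nat_succ N
    rw [this]
    exact Order.succ_le_of_lt hlt
  rw [← Cardinal.mk_fin (N+1), Cardinal.le_def] at hsucc
  obtain ⟨f⟩ := hsucc
  have hrep : ∀ i : Fin (N+1), ∃ x : ↥A, (x : ConnectedComponents ↥A) = f i :=
    fun i => ConnectedComponents.surjective_coe (f i)
  choose x hx using hrep
  have hxne : ∀ i j, i ≠ j → connectedComponent (x i) ≠ connectedComponent (x j) := by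
    intro i j hij h
    exact hij (f.injective (by rw [← hx i, ← hx j, ConnectedComponents.coe_eq_coe, h]))
  -- clopen separators
  have hU : ∀ i j : Fin (N+1), ∃ U : Set ↥A, IsClopen U ∧ x i ∈ U ∧ (i ≠ j → x j ∉ U) := by
    intro i j
    by_cases hij : i = j
    · exact ⟨univ, isClopen_univ, mem_univ _, fun h => absurd hij h⟩
    · have hnm : x j ∉ connectedComponent (x i) := by
        intro hmem
        exact hxne j i (Ne.symm hij) (connectedComponent_eq hmem).symm
      rw [connectedComponent_eq_iInter_isClopen, mem_iInter] at hnm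
      push_neg at hnm
      obtain ⟨⟨U, hUc, hUm⟩, hUn⟩ := hnm
      exact ⟨U, hUc, hUm, fun _ => hUn⟩
  choose U hUclopen hUmem hUnot using hU
  set V : Fin (N+1) → Set ↥A := fun i => ⋂ j, U i j with hVdef
  have hVclopen : ∀ i, IsClopen (V i) := fun i => isClopen_iInter_of_finite (hUclopen i)
  have hVmem : ∀ i, x i ∈ V i := fun i => mem_iInter.2 (hUmem i)
  have hVnot : ∀ i j, i ≠ j → x j ∉ V i := fun i j hij h => hUnot i j hij (mem_iInter.1 h j)
  set W : Fin (N+1) → Set ↥A :=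
    fun i => (if i = Fin.last N then univ else V i) \ ⋃ j, ⋃ (_ : j < i), V j with hWdef
  have hWclopen : ∀ i, IsClopen (W i) := by
    intro i
    apply IsClopen.diff
    · split_ifs
      exacts [isClopen_univ, hVclopen i]
    · exact isClopen_iUnion_of_finite fun j => isClopen_iUnion_of_finite fun _ => hVclopen j
  have hWmem : ∀ i, x i ∈ W i := by
    intro i
    constructor
    · split_ifs
      exacts [mem_univ _, hVmem i]
    · intro hmem
      obtain ⟨j, hji, hjV⟩ : ∃ j, j < i ∧ x i ∈ V j := by
        simpa using hmem
      exact hVnot j i (ne_of_lt hji) hjV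
  have hWdisj : ∀ i j, i < j → Disjoint (W i) (W j) := by
    intro i j hij
    have hiV : W i ⊆ V i := by
      have hne : i ≠ Fin.last N := ne_of_lt (lt_of_lt_of_le hij (Fin.le_last j))
      intro z hz
      have := hz.1
      rwa [if_neg hne] at this
    refine Set.disjoint_left.2 fun z hzi hzj => ?_
    exact hzj.2 (mem_iUnion.2 ⟨i, mem_iUnion.2 ⟨hij, hiV hzi⟩⟩)
  have hWdisj' : ∀ i j, i ≠ j → Disjoint (W i) (W j) := by
    intro i j hij
    rcases lt_or_gt_of_ne hij with h | h
    · exact hWdisj i j h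
    · exact (hWdisj j i h).symm
  have hWcover : ∀ z : ↥A, ∃ i, z ∈ W i := by
    intro z
    by_cases hz : ∃ j, z ∈ V j
    · set S : Finset (Fin (N+1)) := Finset.univ.filter (fun j => z ∈ V j) with hSdef
      have hSne : S.Nonempty := by
        obtain ⟨j, hj⟩ := hz
        exact ⟨j, by simp [hSdef, hj]⟩
      set j0 := S.min' hSne with hj0def
      have hj0V : z ∈ V j0 := by
        have := S.min'_mem hSne
        simpa [hSdef] using this
      have hj0min : ∀ k, k < j0 → z ∉ V k := by
        intro k hk hkV
        have : j0 ≤ k := S.min'_le k (by simp [hSdef, hkV])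
        exact absurd hk (not_lt.2 this)
      refine ⟨j0, ⟨?_, ?_⟩⟩
      · split_ifs
        exacts [mem_univ _, hj0V]
      · intro hmem
        obtain ⟨k, hki, hkV⟩ : ∃ k, k < j0 ∧ z ∈ V k := by simpa using hmem
        exact hj0min k hki hkV
    · push_neg at hz
      refine ⟨Fin.last N, ⟨by rw [if_pos rfl]; exact mem_univ _, ?_⟩⟩
      intro hmem
      obtain ⟨k, _, hkV⟩ : ∃ k, k < Fin.last N ∧ z ∈ V k := by simpa using hmem
      exact hz k hkV
  -- push to α
  set A' : Fin (N+1) → Set α := fun i => Subtype.val '' W i with hA'def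
  have hA'c : ∀ i, IsCompact (A' i) :=
    fun i => ((hWclopen i).1.isCompact).image continuous_subtype_val
  have hA'disj : ∀ i j, i ≠ j → Disjoint (A' i) (A' j) := by
    intro i j hij
    exact (Set.disjoint_image_iff Subtype.val_injective).2 (hWdisj' i j hij)
  have hsep : ∀ i j, i ≠ j → ∃ δ > (0:ℝ), ∀ p ∈ A' i, ∀ q ∈ A' j, δ ≤ dist p q := by
    intro i j hij
    obtain ⟨δ, hδpos, hδ⟩ := (hA'c i).exists_thickening_subset_open
      (hA'c j).isClosed.isOpen_compl ((hA'disj i j hij).subset_compl_right)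
    refine ⟨δ, hδpos, fun p hp q hq => ?_⟩
    by_contra hqlt
    push_neg at hqlt
    exact hδ (Metric.mem_thickening_iff.2 ⟨p, hp, by rwa [dist_comm]⟩) hq
  choose! δf hδfpos hδf using hsep
  set g : Fin (N+1) × Fin (N+1) → ℝ := fun p => if p.1 = p.2 then 1 else δf p.1 p.2 with hgdef
  have hne' : (Finset.univ : Finset (Fin (N+1) × Fin (N+1))).Nonempty := Finset.univ_nonempty
  set ε := Finset.univ.inf' hne' g with hεdef
  have hεpos : 0 < ε := by
    rw [hεdef, Finset.lt_inf'_iff]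
    intro p _
    by_cases h : p.1 = p.2
    · simp [hgdef, h]
    · simpa [hgdef, h] using hδfpos p.1 p.2 h
  have hεle : ∀ i j, i ≠ j → ∀ p ∈ A' i, ∀ q ∈ A' j, ε ≤ dist p q := by
    intro i j hij p hp q hq
    have h1 : ε ≤ g (i, j) := Finset.inf'_le _ (Finset.mem_univ _)
    have h2 : g (i, j) = δf i j := if_neg hij
    exact (h1.trans_eq h2).trans (hδf i j hij p hp q hq)
  obtain ⟨B, hBc, hBne, hBfin, hBcard, hBd⟩ := happrox (ε/4) (by positivity)
  haveI : CompactSpace ↥B := isCompact_iff_compactSpace.mp hBc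
  set Bs : Fin (N+1) → Set ↥B :=
    fun i => Subtype.val ⁻¹' (⋃ p ∈ A' i, Metric.ball p (ε/2)) with hBsdef
  have hBsmem : ∀ i (y : ↥B), y ∈ Bs i ↔ ∃ p ∈ A' i, dist (y : α) p < ε/2 := by
    intro i y
    simp [hBsdef, Metric.mem_ball]
  have hBsopen : ∀ i, IsOpen (Bs i) := fun i =>
    (isOpen_biUnion fun p _ => Metric.isOpen_ball).preimage continuous_subtype_val
  have hBsdisj : ∀ i j, i ≠ j → Disjoint (Bs i) (Bs j) := by
    intro i j hij
    refine Set.disjoint_left.2 fun z hzi hzj => ?_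
    obtain ⟨p, hp, hdp⟩ := (hBsmem i z).1 hzi
    obtain ⟨q, hq, hdq⟩ := (hBsmem j z).1 hzj
    have h1 : ε ≤ dist p q := hεle i j hij p hp q hq
    have h2 : dist p q ≤ dist p (z : α) + dist (z : α) q := dist_triangle _ _ _
    rw [dist_comm p (z : α)] at h2
    linarith
  have hBscover : ∀ z : ↥B, ∃ i, z ∈ Bs i := by
    intro z
    have h1 : infDist (z : α) A ≤ hausdorffDist B A :=
      infDist_le_hausdorffDist_of_mem z.2 hBfin
    have h2 : infDist (z : α) A < ε/2 := lt_of_le_of_lt h1 (by linarith)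
    obtain ⟨p, hpA, hdp⟩ := (infDist_lt_iff hAne).1 h2
    obtain ⟨i, hiW⟩ := hWcover ⟨p, hpA⟩
    exact ⟨i, (hBsmem i z).2 ⟨p, ⟨⟨p, hpA⟩, hiW, rfl⟩, hdp⟩⟩
  have hBsne : ∀ i, (Bs i).Nonempty := by
    intro i
    have hfin' : EMetric.hausdorffEdist A B ≠ ⊤ := by
      rw [show EMetric.hausdorffEdist A B = EMetric.hausdorffEdist B A from hausdorffEDist_comm]
      exact hBfin
    have h1 : infDist ((x i : ↥A) : α) B ≤ hausdorffDist A B :=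
      infDist_le_hausdorffDist_of_mem (x i).2 hfin'
    have h2 : infDist ((x i : ↥A) : α) B < ε/2 := by
      rw [hausdorffDist_comm] at hBd
      linarith
    obtain ⟨q, hqB, hdq⟩ := (infDist_lt_iff hBne).1 h2
    exact ⟨⟨q, hqB⟩, (hBsmem i ⟨q, hqB⟩).2
      ⟨(x i : α), mem_image_of_mem _ (hWmem i), by rwa [dist_comm]⟩⟩
  have hBsclopen : ∀ i, IsClopen (Bs i) := by
    intro i
    refine ⟨?_, hBsopen i⟩
    rw [← isOpen_compl_iff]
    have hcompl : (Bs i)ᶜ = ⋃ j, ⋃ (_ : j ≠ i), Bs j := by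
      ext z
      constructor
      · intro hz
        obtain ⟨j, hj⟩ := hBscover z
        have hji : j ≠ i := fun h => hz (h ▸ hj)
        exact mem_iUnion.2 ⟨j, mem_iUnion.2 ⟨hji, hj⟩⟩
      · intro hz hzi
        obtain ⟨j, hj⟩ := mem_iUnion.1 hz
        obtain ⟨hji, hzj⟩ := mem_iUnion.1 hj
        exact (hBsdisj j i hji).le_bot ⟨hzj, hzi⟩
    rw [hcompl]
    exact isOpen_iUnion fun j => isOpen_iUnion fun _ => hBsopen j
  choose y hy using hBsne
  have hinj : Function.Injective (fun i => ((y i : ↥B) : ConnectedComponents ↥B)) := by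
    intro i j hij
    by_contra hne2
    have h1 : connectedComponent (y i) = connectedComponent (y j) :=
      ConnectedComponents.coe_eq_coe.1 hij
    have h2 : y j ∈ Bs i :=
      (hBsclopen i).connectedComponent_subset (hy i) (h1 ▸ mem_connectedComponent)
    exact (hBsdisj i j hne2).le_bot ⟨h2, hy j⟩
  have hle : ((N+1 : ℕ) : Cardinal) ≤ Cardinal.mk (ConnectedComponents ↥B) := by
    rw [← Cardinal.mk_fin (N+1)]
    exact Cardinal.mk_le_of_injective hinj
  have : (N+1 : ℕ) ≤ N := by exact_mod_cast hle.trans hBcard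
  omega

/-- Šverák's admissible class: open sets `Ω` with `ω ⊆ Ω ⊆ D` whose complement
`closure D \ Ω` has at most `N` connected components. -/
def SverakAdmissible (D ω : Set (EuclideanSpace ℝ (Fin 2))) (N : ℕ)
    (Ω : Set (EuclideanSpace ℝ (Fin 2))) : Prop :=
  IsOpen Ω ∧ ω ⊆ Ω ∧ Ω ⊆ D ∧
    Cardinal.mk (ConnectedComponents ↥(closure D \ Ω)) ≤ N


/-- Compactness of the class `𝒪_ω^N` in the complementary Hausdorff topology. -/
theorem sverak_class_compact
    (D ω : Set (EuclideanSpace ℝ (Fin 2)))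
    (hD : IsOpen D) (hDb : Bornology.IsBounded D) (hDne : D.Nonempty)
    (hω : IsOpen ω) (hωne : ω.Nonempty) (hωD : ω ⊆ D)
    (N : ℕ) (Ωseq : ℕ → Set (EuclideanSpace ℝ (Fin 2)))
    (hadm : ∀ n, SverakAdmissible D ω N (Ωseq n)) :
    ∃ (Ω : Set (EuclideanSpace ℝ (Fin 2))) (φ : ℕ → ℕ), SverakAdmissible D ω N Ω ∧
      StrictMono φ ∧
      Filter.Tendsto
        (fun k => Metric.hausdorffDist (closure D \ Ωseq (φ k)) (closure D \ Ω))
        Filter.atTop (nhds 0) := by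
  classical
  have hC : IsCompact (closure D) := hDb.isCompact_closure
  -- a boundary point
  have hbd : (closure D \ D).Nonempty := by
    by_contra h
    rw [Set.not_nonempty_iff_eq_empty, Set.diff_eq_empty] at h
    have hclosed : IsClosed D := by
      have : closure D = D := Set.Subset.antisymm h subset_closure
      rw [← this]; exact isClosed_closure
    have huniv : D = Set.univ := IsClopen.eq_univ ⟨hclosed, hD⟩ hDne
    rw [huniv] at hDb
    exact NormedSpace.unbounded_univ ℝ (EuclideanSpace ℝ (Fin 2)) hDb
  obtain ⟨p0, hp0⟩ := hbd
  haveI : CompactSpace ↥(closure D) := isCompact_iff_compactSpace.mp hC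
  set X := ↥(closure D) with hXdef
  set T : ℕ → Set X := fun n => Subtype.val ⁻¹' (Ωseq n)ᶜ with hTdef
  have hTclosed : ∀ n, IsClosed (T n) :=
    fun n => ((hadm n).1.isClosed_compl).preimage continuous_subtype_val
  have hTne : ∀ n, (T n).Nonempty := by
    intro n
    exact ⟨⟨p0, hp0.1⟩, fun h => hp0.2 ((hadm n).2.2.1 h)⟩
  set Kseq : ℕ → TopologicalSpace.NonemptyCompacts X := fun n =>
    ⟨⟨T n, (hTclosed n).isCompact⟩, hTne n⟩ with hKdef
  obtain ⟨K, -, φ, hφ, htend⟩ := isCompact_univ.tendsto_subseq (x := Kseq)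
    (fun n => Set.mem_univ _)
  have hdist : Filter.Tendsto
      (fun k => Metric.hausdorffDist ((Kseq (φ k) : Set X)) (K : Set X))
      Filter.atTop (nhds 0) := by
    have h := tendsto_iff_dist_tendsto_zero.1 htend
    simpa [Function.comp, Metric.NonemptyCompacts.dist_eq] using h
  have hfinX : ∀ s t : Set X, s.Nonempty → t.Nonempty →
      EMetric.hausdorffEdist s t ≠ ⊤ := by
    intro s t hs ht
    exact Metric.hausdorffEdist_ne_top_of_nonempty_of_bounded hs ht
      ((isCompact_univ.isBounded).subset (Set.subset_univ s))
      ((isCompact_univ.isBounded).subset (Set.subset_univ t))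
  have hsub : ∀ F : Set X, IsClosed F → (∀ k, (Kseq (φ k) : Set X) ⊆ F) →
      (K : Set X) ⊆ F := by
    intro F hF hall z hz
    have hFne : F.Nonempty := (hTne (φ 0)).mono (hall 0)
    rw [hF.mem_iff_infDist_zero hFne]
    have h0 : ∀ k, Metric.infDist z F ≤
        Metric.hausdorffDist (K : Set X) (Kseq (φ k) : Set X) := by
      intro k
      refine le_trans (Metric.infDist_le_infDist_of_subset (hall k) (hTne (φ k))) ?_
      exact Metric.infDist_le_hausdorffDist_of_mem hz
        (hfinX _ _ K.nonempty (hTne (φ k)))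
    have hconv' : Filter.Tendsto
        (fun k => Metric.hausdorffDist (K : Set X) (Kseq (φ k) : Set X))
        Filter.atTop (nhds 0) := by
      simpa [Metric.hausdorffDist_comm] using hdist
    exact le_antisymm (ge_of_tendsto hconv' (Filter.Eventually.of_forall h0))
      Metric.infDist_nonneg
  have hmem : ∀ z : X, (∀ k, z ∈ (Kseq (φ k) : Set X)) → z ∈ (K : Set X) := by
    intro z hall
    rw [K.isCompact.isClosed.mem_iff_infDist_zero K.nonempty]
    have h0 : ∀ k, Metric.infDist z (K : Set X) ≤
        Metric.hausdorffDist (Kseq (φ k) : Set X) (K : Set X) :=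
      fun k => Metric.infDist_le_hausdorffDist_of_mem (hall k)
        (hfinX _ _ (hTne (φ k)) K.nonempty)
    exact le_antisymm (ge_of_tendsto hdist (Filter.Eventually.of_forall h0))
      Metric.infDist_nonneg
  set K' : Set (EuclideanSpace ℝ (Fin 2)) := Subtype.val '' (K : Set X) with hK'def
  have hK'c : IsCompact K' := K.isCompact.image continuous_subtype_val
  have hK'sub : K' ⊆ closure D := by
    rintro _ ⟨z, _, rfl⟩; exact z.2
  have hK'ω : ∀ p ∈ K', p ∉ ω := by
    rintro _ ⟨z, hzK, rfl⟩
    have hTsub : ∀ k, (Kseq (φ k) : Set X) ⊆ Subtype.val ⁻¹' ωᶜ := by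
      intro k z' hz'
      exact fun hmemω => hz' ((hadm (φ k)).2.1 hmemω)
    exact hsub _ (hω.isClosed_compl.preimage continuous_subtype_val) hTsub hzK
  have hbdK : closure D \ D ⊆ K' := by
    intro p hp
    have hmemK : (⟨p, hp.1⟩ : X) ∈ (K : Set X) :=
      hmem _ (fun k => fun h => hp.2 ((hadm (φ k)).2.2.1 h))
    exact ⟨⟨p, hp.1⟩, hmemK, rfl⟩
  refine ⟨D \ K', φ, ⟨?_, ?_, Set.diff_subset, ?_⟩, hφ, ?_⟩
  case _ => exact hD.sdiff hK'c.isClosed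
  case _ => exact fun p hp => ⟨hωD hp, fun hpK => hK'ω p hpK hp⟩
  all_goals {
    have hcompl : closure D \ (D \ K') = K' := by
      ext p
      constructor
      · rintro ⟨hpC, hpΩ⟩
        by_cases hpD : p ∈ D
        · by_contra hpK; exact hpΩ ⟨hpD, hpK⟩
        · exact hbdK ⟨hpC, hpD⟩
      · intro hpK
        exact ⟨hK'sub hpK, fun hmem2 => hmem2.2 hpK⟩
    have himg : ∀ n, Subtype.val '' (T n) = closure D \ Ωseq n := by
      intro n
      rw [hTdef]
      rw [Subtype.image_preimage_coe]
      exact (Set.diff_eq _ _).symm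
    have heq : ∀ k, Metric.hausdorffDist (closure D \ Ωseq (φ k)) K' =
        Metric.hausdorffDist ((Kseq (φ k) : Set X)) (K : Set X) := by
      intro k
      rw [← himg (φ k), hK'def, Metric.hausdorffDist_image isometry_subtype_coe]
      rfl
    have hdist' : Filter.Tendsto
        (fun k => Metric.hausdorffDist (closure D \ Ωseq (φ k)) K')
        Filter.atTop (nhds 0) := by
      simpa only [heq] using hdist
    rw [hcompl]
    first
    | · -- cardinality goal
        have hK'ne : K'.Nonempty := ⟨p0, hbdK hp0⟩
        apply components_card_le_of_approx hK'c hK'ne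
        intro ε hε
        obtain ⟨k, hk⟩ := (hdist'.eventually (gt_mem_nhds hε)).exists
        refine ⟨closure D \ Ωseq (φ k), ?_, ?_, ?_, (hadm (φ k)).2.2.2, hk⟩
        · exact hC.of_isClosed_subset (isClosed_closure.sdiff (hadm (φ k)).1)
            Set.diff_subset
        · exact ⟨p0, hp0.1, fun h => hp0.2 ((hadm (φ k)).2.2.1 h)⟩
        · exact Metric.hausdorffEdist_ne_top_of_nonempty_of_bounded
            ⟨p0, hp0.1, fun h => hp0.2 ((hadm (φ k)).2.2.1 h)⟩ ⟨p0, hbdK hp0⟩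
            ((hC.isBounded).subset Set.diff_subset)
            ((hC.isBounded).subset hK'sub)
    | exact hdist'
  }
end

section
/- Let H be a real Hilbert space, λ > 0, let A : H → H be a λ-dissipative bounded linear operator, let f, y₀ ∈ H, let y(t) = exp(tA) y₀ + ∫₀^t exp(sA) f ds be the mild solution of y' = A y + f, y(0) = y₀, and let p ∈ H satisfy A p = -f. Then for every T > 0, ∫₀^T ‖y(t) - p‖² dt ≤ ‖y₀ - p‖² / (2λ). (Abstract form of the time-integrated estimate (13) in the paper, with a bound independent of the time horizon T.) -/
open RealInnerProductSpace

set_option synthInstance.maxHeartbeats 1000000 in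
private lemma expCommute {H : Type*} [NormedAddCommGroup H] [InnerProductSpace ℝ H]
    [CompleteSpace H] (A : H →L[ℝ] H) (s : ℝ) :
    Commute (NormedSpace.exp (s • A)) A :=
  ((Commute.refl A).smul_left s).exp_left

private lemma expDeriv {H : Type*} [NormedAddCommGroup H] [InnerProductSpace ℝ H]
    [CompleteSpace H] (A : H →L[ℝ] H) (x : H) (t : ℝ) :
    HasDerivAt (fun s : ℝ => NormedSpace.exp (s • A) x)
      (A (NormedSpace.exp (t • A) x)) t := by
  have h := (hasDerivAt_exp_smul_const' (𝕂 := ℝ) A t).clm_apply (hasDerivAt_const t x)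
  simpa using h

private lemma expCont {H : Type*} [NormedAddCommGroup H] [InnerProductSpace ℝ H]
    [CompleteSpace H] (A : H →L[ℝ] H) (x : H) :
    Continuous (fun s : ℝ => NormedSpace.exp (s • A) x) :=
  continuous_iff_continuousAt.2 fun t => (expDeriv A x t).continuousAt

/-- Time-integrated estimate for the distance of the mild solution to the stationary
state, with a bound independent of the time horizon `T`. -/
theorem mild_solution_time_integrated_bound
    {H : Type*} [NormedAddCommGroup H] [InnerProductSpace ℝ H] [CompleteSpace H]
    (lam : ℝ) (hlam : 0 < lam) (A : H →L[ℝ] H)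
    (hA : ∀ x : H, ⟪A x, x⟫ ≤ -lam * ‖x‖ ^ 2) (f y₀ : H)
    (y : ℝ → H)
    (hy : ∀ t : ℝ, y t = (NormedSpace.exp (t • A)) y₀
      + ∫ s in (0:ℝ)..t, (NormedSpace.exp (s • A)) f)
    (p : H) (hp : A p = -f)
    (T : ℝ) (hT : 0 < T) :
    ∫ t in (0:ℝ)..T, ‖y t - p‖ ^ 2 ≤ ‖y₀ - p‖ ^ 2 / (2 * lam) := by
  set x := y₀ - p with hx
  set u : ℝ → H := fun t => NormedSpace.exp (t • A) x with hu
  -- exp commutes with A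
  have hcomm : ∀ s : ℝ, NormedSpace.exp (s • A) (A p) = A (NormedSpace.exp (s • A) p) := by
    intro s
    have := congrArg (fun B : H →L[ℝ] H => B p) (expCommute A s).eq
    simpa using this
  -- integral identity: ∫₀ᵗ exp(sA) f = p - exp(tA) p
  have hint : ∀ t : ℝ, (∫ s in (0:ℝ)..t, NormedSpace.exp (s • A) f)
      = p - NormedSpace.exp (t • A) p := by
    intro t
    have hder : ∀ s ∈ Set.uIcc (0:ℝ) t,
        HasDerivAt (fun r : ℝ => -(NormedSpace.exp (r • A) p))
          (NormedSpace.exp (s • A) f) s := by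
      intro s _
      have h := (expDeriv A p s).neg
      have hf : -(A (NormedSpace.exp (s • A) p)) = NormedSpace.exp (s • A) f := by
        rw [← hcomm s, hp]
        simp
      rwa [hf] at h
    have hInt : IntervalIntegrable (fun s : ℝ => NormedSpace.exp (s • A) f)
        MeasureTheory.volume 0 t := (expCont A f).intervalIntegrable _ _
    have := intervalIntegral.integral_eq_sub_of_hasDerivAt hder hInt
    rw [this]
    simp [NormedSpace.exp_zero]
    abel
  have hyu : ∀ t : ℝ, y t - p = u t := by
    intro t
    rw [hy t, hint t, hu, hx]
    simp [map_sub]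
    abel
  -- derivative of u
  have hud : ∀ t : ℝ, HasDerivAt u (A (u t)) t := fun t => expDeriv A x t
  have hucont : Continuous u := expCont A x
  -- g and its derivative
  set g : ℝ → ℝ := fun t => ‖u t‖ ^ 2 with hg
  have hgd : ∀ t : ℝ, HasDerivAt g (2 * ⟪A (u t), u t⟫) t := by
    intro t
    have h := (hud t).inner ℝ (hud t)
    have : HasDerivAt (fun s => ⟪u s, u s⟫) (2 * ⟪A (u t), u t⟫) t := by
      refine h.congr_deriv ?_
      rw [real_inner_comm (u t) (A (u t))]
      ring
    have heq : (fun s => ⟪u s, u s⟫) = g := by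
      funext s; rw [hg]; simp [real_inner_self_eq_norm_sq]
    rwa [heq] at this
  have hgcont : Continuous g := by
    rw [hg]; fun_prop
  have hg'cont : Continuous (fun t => 2 * ⟪A (u t), u t⟫) :=
    continuous_const.mul ((A.continuous.comp hucont).inner hucont)
  -- pointwise bound: g t ≤ -(2 * ⟪A (u t), u t⟫) / (2 * lam)
  have hpt : ∀ t : ℝ, g t ≤ -(2 * ⟪A (u t), u t⟫) / (2 * lam) := by
    intro t
    have h1 := hA (u t)
    show ‖u t‖ ^ 2 ≤ -(2 * ⟪A (u t), u t⟫) / (2 * lam)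
    rw [le_div_iff₀ (by positivity)]
    nlinarith
  -- integrate
  have hInt1 : IntervalIntegrable g MeasureTheory.volume 0 T :=
    hgcont.intervalIntegrable _ _
  have hInt2 : IntervalIntegrable (fun t => -(2 * ⟪A (u t), u t⟫) / (2 * lam))
      MeasureTheory.volume 0 T :=
    (hg'cont.neg.div_const _).intervalIntegrable _ _
  have hmono : (∫ t in (0:ℝ)..T, g t)
      ≤ ∫ t in (0:ℝ)..T, -(2 * ⟪A (u t), u t⟫) / (2 * lam) :=
    intervalIntegral.integral_mono_on hT.le hInt1 hInt2 (fun t _ => hpt t)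
  have hftc : (∫ t in (0:ℝ)..T, -(2 * ⟪A (u t), u t⟫)) = g 0 - g T := by
    have hder : ∀ t ∈ Set.uIcc (0:ℝ) T,
        HasDerivAt (fun s => -(g s)) (-(2 * ⟪A (u t), u t⟫)) t :=
      fun t _ => (hgd t).neg
    have hI : IntervalIntegrable (fun t => -(2 * ⟪A (u t), u t⟫))
        MeasureTheory.volume 0 T := hg'cont.neg.intervalIntegrable _ _
    have := intervalIntegral.integral_eq_sub_of_hasDerivAt hder hI
    rw [this]; ring
  have hdiv : (∫ t in (0:ℝ)..T, -(2 * ⟪A (u t), u t⟫) / (2 * lam))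
      = (g 0 - g T) / (2 * lam) := by
    rw [intervalIntegral.integral_div, hftc]
  have hg0 : g 0 = ‖y₀ - p‖ ^ 2 := by
    rw [hg, hu, hx]
    simp [NormedSpace.exp_zero]
  have hgT : 0 ≤ g T := by rw [hg]; positivity
  calc (∫ t in (0:ℝ)..T, ‖y t - p‖ ^ 2) = ∫ t in (0:ℝ)..T, g t := by
        congr 1; funext t; rw [hg, hyu t]
    _ ≤ (g 0 - g T) / (2 * lam) := by rw [← hdiv]; exact hmono
    _ ≤ ‖y₀ - p‖ ^ 2 / (2 * lam) := by
        rw [← hg0]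
        apply div_le_div_of_nonneg_right ?_ (by positivity)
        linarith
end
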